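/- arXiv:2306.05630 — 2 statements merged into one kernel-verified Lean document; each statement's English description precedes it below -/
import Mathlib

section
/- A complex Hilbert space has a unique semi-inner product, namely its inner product: if H is a complex Hilbert space and B : H × H → ℂ is linear in the first argument, satisfies B(x,x) = ‖x‖² for all x ∈ H, and satisfies |B(x,y)|² ≤ ‖x‖²·‖y‖² for all x, y ∈ H, then B(x,y) equals the inner product of x and y (linear in x, conjugate-linear in y) for all x, y ∈ H. -/
open scoped InnerProductSpace

/-- a complex Hilbert space has a unique semi-inner product, namely its inner
product (taken linear in the first variable, conjugate-linear in the second, i.e.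
`⟪y, x⟫_ℂ` in Mathlib's convention). -/
theorem semiInnerProduct_unique_hilbert (H : Type*) [NormedAddCommGroup H]
    [InnerProductSpace ℂ H] [CompleteSpace H]
    (B : H → H → ℂ)
    (hlin : ∀ y : H, IsLinearMap ℂ (fun x => B x y))
    (hself : ∀ x : H, B x x = ((‖x‖ ^ 2 : ℝ) : ℂ))
    (hcs : ∀ x y : H, ‖B x y‖ ^ 2 ≤ ‖x‖ ^ 2 * ‖y‖ ^ 2) :
    ∀ x y : H, B x y = ⟪y, x⟫_ℂ := by
  intro x y
  -- the functional x ↦ B x y is bounded by ‖y‖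
  have hbd : ∀ u : H, ‖B u y‖ ≤ ‖y‖ * ‖u‖ := by
    intro u
    have h := hcs u y
    have h1 : ‖B u y‖ = ‖B u y‖ := rfl
    nlinarith [norm_nonneg (B u y), norm_nonneg u, norm_nonneg y,
      mul_nonneg (norm_nonneg y) (norm_nonneg u)]
  set f : H →L[ℂ] ℂ := LinearMap.mkContinuous ((hlin y).mk' _) ‖y‖ hbd with hf
  set z : H := (InnerProductSpace.toDual ℂ H).symm f with hzdef
  have hz : ∀ u : H, ⟪z, u⟫_ℂ = B u y := by
    intro u
    have := InnerProductSpace.toDual_symm_apply (𝕜 := ℂ) (E := H) (y := f) (x := u)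
    exact this
  have hzy : ⟪z, y⟫_ℂ = ((‖y‖ ^ 2 : ℝ) : ℂ) := by rw [hz y, hself y]
  have hznorm : ‖z‖ ≤ ‖y‖ := by
    by_cases hz0 : z = 0
    · simp [hz0]
    · have h := hbd z
      rw [← hz z] at h
      have hzz : ⟪z, z⟫_ℂ = ((‖z‖ ^ 2 : ℝ) : ℂ) := by
        rw [inner_self_eq_norm_sq_to_K]; norm_cast
      rw [hzz] at h
      have : ‖z‖ ^ 2 ≤ ‖y‖ * ‖z‖ := by
        simpa [Complex.norm_real, abs_of_nonneg (sq_nonneg ‖z‖)] using h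
      have hzpos : 0 < ‖z‖ := norm_pos_iff.mpr hz0
      nlinarith
  have hzy' : z = y := by
    have hre : Complex.re ⟪z, y⟫_ℂ = ‖y‖ ^ 2 := by rw [hzy]; exact Complex.ofReal_re _
    have hns : ‖z - y‖ ^ 2 = ‖z‖ ^ 2 - 2 * Complex.re ⟪z, y⟫_ℂ + ‖y‖ ^ 2 :=
      @norm_sub_sq ℂ H _ _ _ z y
    have hle : ‖z - y‖ ^ 2 ≤ 0 := by
      rw [hns, hre]
      nlinarith [norm_nonneg z, norm_nonneg y]
    have : ‖z - y‖ = 0 := by nlinarith [norm_nonneg (z - y)]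
    exact sub_eq_zero.mp (norm_eq_zero.mp this)
  rw [← hz x, hzy']
end

section
/- For 1 ≤ p < ∞ and any vector z = (u,v) ∈ ℂ² with ‖z‖_p = 1 and u ≠ 0 and v ≠ 0, the following are equivalent: (i) both [E₁ z, z]_p and [E₂ z, z]_p are nonnegative real numbers (i.e., σ₁ is a physical quantity at the pure state |z⟩); (ii) the complex number w = (v/u)·|u|^p + (u/v)·|v|^p is real and satisfies −1 ≤ w ≤ 1. -/
/-- sign of a complex number: `u/|u|` if `u ≠ 0`, else `0`. -/
noncomputable def csign (u : ℂ) : ℂ := if u = 0 then 0 else u / ‖u‖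

/-- the `p`-norm on `ℂ²`: `‖(a,b)‖_p = (|a|^p + |b|^p)^{1/p}`. -/
noncomputable def pnorm (p : ℝ) (x : Fin 2 → ℂ) : ℝ :=
  (‖x 0‖ ^ p + ‖x 1‖ ^ p) ^ (1 / p)

/-- the semi-inner product `[x,y]_p = ‖y‖_p^{2-p} (a·sign(c̄)|c|^{p-1} + b·sign(d̄)|d|^{p-1})`. -/
noncomputable def sip (p : ℝ) (x y : Fin 2 → ℂ) : ℂ :=
  ((pnorm p y ^ (2 - p) : ℝ) : ℂ) *
    (x 0 * csign ((starRingEnd ℂ) (y 0)) * ((‖y 0‖ ^ (p - 1) : ℝ) : ℂ) +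
     x 1 * csign ((starRingEnd ℂ) (y 1)) * ((‖y 1‖ ^ (p - 1) : ℝ) : ℂ))

lemma key (p : ℝ) (u v : ℂ) (hu : u ≠ 0) (hv : v ≠ 0)
    (habs : ‖u‖ ^ p + ‖v‖ ^ p = 1) (c : ℂ) :
    (1/2 : ℂ) * (u + c * v) * ((starRingEnd ℂ) u / ‖u‖) * ((‖u‖ ^ (p-1) : ℝ) : ℂ)
    + (1/2 : ℂ) * (c * u + v) * ((starRingEnd ℂ) v / ‖v‖) * ((‖v‖ ^ (p-1) : ℝ) : ℂ)
    = (1 + c * (v / u * ((‖u‖ ^ p : ℝ) : ℂ) + u / v * ((‖v‖ ^ p : ℝ) : ℂ))) / 2 := by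
  have hau : (0:ℝ) < ‖u‖ := norm_pos_iff.mpr hu
  have hav : (0:ℝ) < ‖v‖ := norm_pos_iff.mpr hv
  have hau' : ((‖u‖ : ℝ) : ℂ) ≠ 0 := by exact_mod_cast hau.ne'
  have hav' : ((‖v‖ : ℝ) : ℂ) ≠ 0 := by exact_mod_cast hav.ne'
  have h1 : ‖u‖ ^ p = ‖u‖ ^ (p-1) * ‖u‖ := by
    rw [show p = (p-1)+1 by ring, Real.rpow_add hau, Real.rpow_one]; ring_nf
  have h2 : ‖v‖ ^ p = ‖v‖ ^ (p-1) * ‖v‖ := by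
    rw [show p = (p-1)+1 by ring, Real.rpow_add hav, Real.rpow_one]; ring_nf
  have hcu : u * (starRingEnd ℂ) u = (((‖u‖)^2 : ℝ) : ℂ) := by
    rw [Complex.mul_conj]; norm_cast; exact (Complex.sq_norm u).symm
  have hcv : v * (starRingEnd ℂ) v = (((‖v‖)^2 : ℝ) : ℂ) := by
    rw [Complex.mul_conj]; norm_cast; exact (Complex.sq_norm v).symm
  push_cast at hcu hcv
  have e1 : u * ((starRingEnd ℂ) u / (‖u‖ : ℂ)) * ((‖u‖ ^ (p-1) : ℝ) : ℂ)
      = ((‖u‖ ^ p : ℝ) : ℂ) := by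
    rw [h1]; push_cast
    field_simp
    linear_combination ((‖u‖ ^ (p-1) : ℝ) : ℂ) * hcu
  have e2 : v * ((starRingEnd ℂ) u / (‖u‖ : ℂ)) * ((‖u‖ ^ (p-1) : ℝ) : ℂ)
      = v / u * ((‖u‖ ^ p : ℝ) : ℂ) := by
    rw [h1]; push_cast
    field_simp
    linear_combination ((‖u‖ ^ (p-1) : ℝ) : ℂ) * hcu
  have e3 : v * ((starRingEnd ℂ) v / (‖v‖ : ℂ)) * ((‖v‖ ^ (p-1) : ℝ) : ℂ)
      = ((‖v‖ ^ p : ℝ) : ℂ) := by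
    rw [h2]; push_cast
    field_simp
    linear_combination ((‖v‖ ^ (p-1) : ℝ) : ℂ) * hcv
  have e4 : u * ((starRingEnd ℂ) v / (‖v‖ : ℂ)) * ((‖v‖ ^ (p-1) : ℝ) : ℂ)
      = u / v * ((‖v‖ ^ p : ℝ) : ℂ) := by
    rw [h2]; push_cast
    field_simp
    linear_combination ((‖v‖ ^ (p-1) : ℝ) : ℂ) * hcv
  have hcast : ((‖u‖ ^ p : ℝ) : ℂ) + ((‖v‖ ^ p : ℝ) : ℂ) = 1 := by
    exact_mod_cast congrArg (fun r : ℝ => (r : ℂ)) habs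
  calc (1/2 : ℂ) * (u + c * v) * ((starRingEnd ℂ) u / ‖u‖) * ((‖u‖ ^ (p-1) : ℝ) : ℂ)
      + (1/2 : ℂ) * (c * u + v) * ((starRingEnd ℂ) v / ‖v‖) * ((‖v‖ ^ (p-1) : ℝ) : ℂ)
      = (u * ((starRingEnd ℂ) u / (‖u‖ : ℂ)) * ((‖u‖ ^ (p-1) : ℝ) : ℂ)
        + c * (v * ((starRingEnd ℂ) u / (‖u‖ : ℂ)) * ((‖u‖ ^ (p-1) : ℝ) : ℂ))
        + v * ((starRingEnd ℂ) v / (‖v‖ : ℂ)) * ((‖v‖ ^ (p-1) : ℝ) : ℂ)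
        + c * (u * ((starRingEnd ℂ) v / (‖v‖ : ℂ)) * ((‖v‖ ^ (p-1) : ℝ) : ℂ))) / 2 := by
        ring
    _ = (1 + c * (v / u * ((‖u‖ ^ p : ℝ) : ℂ) + u / v * ((‖v‖ ^ p : ℝ) : ℂ))) / 2 := by
        rw [e1, e2, e3, e4, ← hcast]; ring

/-- for `1 ≤ p < ∞` and a unit vector `z = (u,v)` in `(ℂ², ‖·‖_p)` with
`u ≠ 0` and `v ≠ 0`: both `[E₁z,z]_p` and `[E₂z,z]_p` are nonnegative real numbers
(i.e. `σ₁` is a physical quantity at `|z⟩`) if and only if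
`w = (v/u)|u|^p + (u/v)|v|^p` is real with `-1 ≤ w ≤ 1`. -/
theorem pauli_sigma1_physical_quantity_iff (p : ℝ) (hp : 1 ≤ p)
    (E₁ E₂ : Matrix (Fin 2) (Fin 2) ℂ)
    (hE₁ : E₁ = (1 / 2 : ℂ) • !![1, 1; 1, 1])
    (hE₂ : E₂ = (1 / 2 : ℂ) • !![1, -1; -1, 1])
    (z : Fin 2 → ℂ) (hz : pnorm p z = 1) (hu : z 0 ≠ 0) (hv : z 1 ≠ 0) :
    (((sip p (E₁.mulVec z) z).im = 0 ∧ 0 ≤ (sip p (E₁.mulVec z) z).re) ∧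
     ((sip p (E₂.mulVec z) z).im = 0 ∧ 0 ≤ (sip p (E₂.mulVec z) z).re)) ↔
    ((z 1 / z 0 * ((‖z 0‖ ^ p : ℝ) : ℂ)
        + z 0 / z 1 * ((‖z 1‖ ^ p : ℝ) : ℂ)).im = 0 ∧
      -1 ≤ (z 1 / z 0 * ((‖z 0‖ ^ p : ℝ) : ℂ)
        + z 0 / z 1 * ((‖z 1‖ ^ p : ℝ) : ℂ)).re ∧
      (z 1 / z 0 * ((‖z 0‖ ^ p : ℝ) : ℂ)
        + z 0 / z 1 * ((‖z 1‖ ^ p : ℝ) : ℂ)).re ≤ 1) := by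
  have hp0 : p ≠ 0 := by linarith
  set u := z 0 with hu0
  set v := z 1 with hv0
  set w : ℂ := v / u * ((‖u‖ ^ p : ℝ) : ℂ) + u / v * ((‖v‖ ^ p : ℝ) : ℂ) with hw
  have habs : ‖u‖ ^ p + ‖v‖ ^ p = 1 := by
    have hnn : 0 ≤ ‖u‖ ^ p + ‖v‖ ^ p := by positivity
    have h := hz
    unfold pnorm at h
    calc ‖u‖ ^ p + ‖v‖ ^ p
        = (‖u‖ ^ p + ‖v‖ ^ p) ^ ((1/p) * p) := by
          rw [one_div_mul_cancel hp0, Real.rpow_one]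
      _ = ((‖u‖ ^ p + ‖v‖ ^ p) ^ (1/p)) ^ p := Real.rpow_mul hnn _ _
      _ = 1 ^ p := by rw [h]
      _ = 1 := Real.one_rpow p
  have hcu : (starRingEnd ℂ) u ≠ 0 := by simpa using hu
  have hcv : (starRingEnd ℂ) v ≠ 0 := by simpa using hv
  have hsig1 : sip p (E₁.mulVec z) z = (1 + w) / 2 := by
    have h := key p u v hu hv habs 1
    rw [one_mul, one_mul] at h
    have hc0 : ¬ (starRingEnd ℂ) (z 0) = 0 := by simpa using hu
    have hc1 : ¬ (starRingEnd ℂ) (z 1) = 0 := by simpa using hv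
    simp only [sip, csign, hc0, hc1, if_neg, hz, Real.one_rpow, Complex.ofReal_one, one_mul,
      Complex.norm_conj, hE₁, Matrix.mulVec, dotProduct, Fin.sum_univ_two,
      Matrix.smul_apply, Matrix.cons_val', Matrix.cons_val_zero, Matrix.cons_val_one,
      Matrix.head_cons, Matrix.head_fin_const, Matrix.empty_val', Matrix.cons_val_fin_one,
      smul_eq_mul, if_false, Matrix.of_apply]
    rw [hw]; linear_combination h
  have hsig2 : sip p (E₂.mulVec z) z = (1 - w) / 2 := by
    have h := key p u v hu hv habs (-1)
    simp only [neg_one_mul, neg_mul] at h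
    have hc0 : ¬ (starRingEnd ℂ) (z 0) = 0 := by simpa using hu
    have hc1 : ¬ (starRingEnd ℂ) (z 1) = 0 := by simpa using hv
    simp only [sip, csign, hc0, hc1, if_neg, hz, Real.one_rpow, Complex.ofReal_one, one_mul,
      Complex.norm_conj, hE₂, Matrix.mulVec, dotProduct, Fin.sum_univ_two,
      Matrix.smul_apply, Matrix.cons_val', Matrix.cons_val_zero, Matrix.cons_val_one,
      Matrix.head_cons, Matrix.head_fin_const, Matrix.empty_val', Matrix.cons_val_fin_one,
      smul_eq_mul, if_false, Matrix.of_apply]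
    rw [hw]; linear_combination h
  rw [hsig1, hsig2]
  have r1 : ∀ c : ℂ, (c / 2).re = c.re / 2 := by
    intro c; simp [Complex.div_re, Complex.normSq]
  have r2 : ∀ c : ℂ, (c / 2).im = c.im / 2 := by
    intro c; simp [Complex.div_im, Complex.normSq]
  simp only [r1, r2, Complex.add_im, Complex.add_re, Complex.sub_im, Complex.sub_re,
    Complex.one_im, Complex.one_re]
  constructor
  · rintro ⟨⟨h1, h2⟩, ⟨h3, h4⟩⟩
    refine ⟨by linarith, by linarith, by linarith⟩
  · rintro ⟨h1, h2, h3⟩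
    exact ⟨⟨by linarith, by linarith⟩, ⟨by linarith, by linarith⟩⟩
end
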